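/- (i) If the set of minimizers of J_p over ℝ^d is nonempty and θ = 0 is the unique minimizer of f_∞ over ℝ^d, then the set of minimizers of J_p over ℝ^d is compact. (ii) If instead the set of minimizers of J_p over ℝ^d is nonempty, ∇p(θ) ∈ span{φ(S)} for every θ ∈ span{φ(S)}, and θ = 0 is the unique minimizer of f_∞ over span{φ(S)}, then the set of minimizers of J_p that lie in span{φ(S)} is nonempty and compact. -/

import Mathlib

open Matrix Filter Topology RealInnerProductSpace

namespace Stmt12Aux

noncomputable def Qb {n : ℕ} (ξ x : Fin n → ℝ) : ℝ := ∑ i, ξ i * (x i * x i)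
noncomputable def bilQ {n : ℕ} (ξ x y : Fin n → ℝ) : ℝ := ∑ i, ξ i * (x i * y i)

lemma Qb_nonneg {n : ℕ} {ξ : Fin n → ℝ} (hξ : ∀ i, 0 ≤ ξ i) (x : Fin n → ℝ) : 0 ≤ Qb ξ x :=
  Finset.sum_nonneg fun i _ => mul_nonneg (hξ i) (mul_self_nonneg _)

lemma Qb_add_smul {n : ℕ} (ξ x y : Fin n → ℝ) (s : ℝ) :
    Qb ξ (x + s • y) = Qb ξ x + 2 * s * bilQ ξ x y + s ^ 2 * Qb ξ y := by
  simp only [Qb, bilQ, Finset.mul_sum, ← Finset.sum_add_distrib]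
  exact Finset.sum_congr rfl fun i _ => by
    simp only [Pi.add_apply, Pi.smul_apply, smul_eq_mul]; ring

lemma Qb_smul {n : ℕ} (ξ x : Fin n → ℝ) (s : ℝ) : Qb ξ (s • x) = s ^ 2 * Qb ξ x := by
  simp only [Qb, Finset.mul_sum]
  exact Finset.sum_congr rfl fun i _ => by
    simp only [Pi.smul_apply, smul_eq_mul]; ring

lemma Qb_sub_le {n : ℕ} {ξ : Fin n → ℝ} (hξ : ∀ i, 0 ≤ ξ i) (x y : Fin n → ℝ) :
    Qb ξ (x - y) ≤ 2 * Qb ξ x + 2 * Qb ξ y := by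
  simp only [Qb, Finset.mul_sum, ← Finset.sum_add_distrib]
  refine Finset.sum_le_sum fun i _ => ?_
  have := hξ i
  have := sq_nonneg (x i + y i)
  simp only [Pi.sub_apply]
  nlinarith [sq_nonneg (x i + y i), hξ i]

lemma bilQ_add_right {n : ℕ} (ξ x y z : Fin n → ℝ) :
    bilQ ξ x (y + z) = bilQ ξ x y + bilQ ξ x z := by
  simp only [bilQ, ← Finset.sum_add_distrib]
  exact Finset.sum_congr rfl fun i _ => by simp only [Pi.add_apply]; ring

lemma bilQ_zero_right {n : ℕ} (ξ x : Fin n → ℝ) : bilQ ξ x 0 = 0 := by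
  simp [bilQ]

lemma Qb_continuous {n : ℕ} (ξ : Fin n → ℝ) : Continuous (Qb ξ) := by
  unfold Qb
  exact continuous_finset_sum _ fun i _ =>
    continuous_const.mul ((continuous_apply i).mul (continuous_apply i))

lemma Qb_eq_zero {n : ℕ} {ξ : Fin n → ℝ} (hξ : ∀ i, 0 < ξ i) {x : Fin n → ℝ}
    (h : Qb ξ x = 0) : x = 0 := by
  funext i
  by_contra hxi
  have hpos : 0 < ξ i * (x i * x i) := mul_pos (hξ i) (mul_self_pos.2 hxi)
  have hsum : 0 < Qb ξ x :=
    Finset.sum_pos' (fun j _ => mul_nonneg (hξ j).le (mul_self_nonneg _))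
      ⟨i, Finset.mem_univ i, hpos⟩
  rw [h] at hsum
  exact lt_irrefl _ hsum

/-- gradient inequality for convex functions -/
lemma grad_ineq {E : Type*} [NormedAddCommGroup E] [InnerProductSpace ℝ E] [CompleteSpace E]
    {p : E → ℝ} (hconv : ConvexOn ℝ Set.univ p) {x g : E}
    (hg : HasGradientAt p g x) (y : E) : p x + ⟪g, y - x⟫ ≤ p y := by
  set φ : ℝ → ℝ := fun t => p (AffineMap.lineMap x y t) with hφdef
  have hφc : ConvexOn ℝ Set.univ φ := by
    have := hconv.comp_affineMap (AffineMap.lineMap x y)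
    exact this
  have hline : HasDerivAt (fun t : ℝ => AffineMap.lineMap x y t) (y - x) 0 := by
    simp only [AffineMap.lineMap_apply]
    simpa using ((hasDerivAt_id (0:ℝ)).smul_const (y - x)).add_const x
  have hF : HasFDerivAt p (InnerProductSpace.toDual ℝ E g)
      ((fun t : ℝ => AffineMap.lineMap x y t) 0) := by
    simpa using hg.hasFDerivAt
  have hder : HasDerivAt φ ⟪g, y - x⟫ 0 := by
    have := hF.comp_hasDerivAt 0 hline
    exact this
  -- slope bound
  have hslope : Tendsto (slope φ 0) (𝓝[>] (0:ℝ)) (𝓝 ⟪g, y - x⟫) :=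
    (hasDerivAt_iff_tendsto_slope.1 hder).mono_left
      (nhdsWithin_mono _ fun t ht => ne_of_gt ht)
  have hbound : ∀ᶠ t in 𝓝[>] (0:ℝ), slope φ 0 t ≤ φ 1 - φ 0 := by
    filter_upwards [Ioc_mem_nhdsGT_of_mem (Set.mem_Ico.2 ⟨le_refl (0:ℝ), zero_lt_one⟩)]
      with t ht
    obtain ⟨ht0, ht1⟩ := ht
    have hconvx := hφc.2 (Set.mem_univ (0:ℝ)) (Set.mem_univ (1:ℝ))
      (by linarith : (0:ℝ) ≤ 1 - t) (le_of_lt ht0) (by ring)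
    have : φ t ≤ (1 - t) * φ 0 + t * φ 1 := by
      simpa [smul_eq_mul] using hconvx
    rw [slope_def_field, sub_zero, div_le_iff₀ ht0]
    nlinarith
  have hle : ⟪g, y - x⟫ ≤ φ 1 - φ 0 := le_of_tendsto hslope hbound
  have h0 : φ 0 = p x := by simp [hφdef]
  have h1 : φ 1 = p y := by simp [hφdef]
  rw [h0, h1] at hle
  linarith


/-- Core boundedness lemma: any set of `V'`-points with bounded regularized objective
values is bounded, provided no unit vector of `V'` makes the recession objective
nonpositive. -/
lemma aux_bounded {d n : ℕ} (ξ : Fin n → ℝ) (hξ : ∀ i, 0 < ξ i)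
    (w : EuclideanSpace ℝ (Fin d) →ₗ[ℝ] (Fin n → ℝ)) (c : Fin n → ℝ)
    (p pinf : EuclideanSpace ℝ (Fin d) → ℝ)
    (hp_conv : ConvexOn ℝ Set.univ p)
    (hp_cont : Continuous p)
    (g0 : EuclideanSpace ℝ (Fin d))
    (hg0 : ∀ θ, p 0 + ⟪g0, θ⟫ ≤ p θ)
    (hlim : ∀ θ : EuclideanSpace ℝ (Fin d),
      Tendsto (fun a : ℝ => p (a • θ) / a ^ 2) atTop (𝓝 (pinf θ)))
    (V' : Submodule ℝ (EuclideanSpace ℝ (Fin d)))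
    (huniq : ∀ u ∈ V', ‖u‖ = 1 →
      (1/2 : ℝ) * Qb ξ (w u) + pinf u ≤ 0 → False)
    (A : Set (EuclideanSpace ℝ (Fin d))) (m0 : ℝ)
    (hA : ∀ θ ∈ A, θ ∈ V' ∧ (1/2 : ℝ) * Qb ξ (c + w θ) + p θ ≤ m0) :
    Bornology.IsBounded A := by
  by_contra hub
  rw [isBounded_iff_forall_norm_le] at hub
  push_neg at hub
  choose θs hθA hθn using fun k : ℕ => hub (k : ℝ)
  have hξ' : ∀ i, (0:ℝ) ≤ ξ i := fun i => (hξ i).le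
  have hapos : ∀ k, (0:ℝ) < ‖θs k‖ := fun k =>
    lt_of_le_of_lt (Nat.cast_nonneg k) (hθn k)
  have hne : ∀ k, θs k ≠ 0 := fun k h => by
    have := hapos k; rw [h, norm_zero] at this; exact lt_irrefl _ this
  set u : ℕ → EuclideanSpace ℝ (Fin d) := fun k => ‖θs k‖⁻¹ • θs k with hu_def
  have hu_sphere : ∀ k, u k ∈ Metric.sphere (0:EuclideanSpace ℝ (Fin d)) 1 := fun k => by
    rw [mem_sphere_zero_iff_norm]
    rw [norm_smul, norm_inv, norm_norm, inv_mul_cancel₀ (hapos k).ne']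
  obtain ⟨ul, hul_mem, φ, hφmono, hconv⟩ :=
    (isCompact_sphere (0:EuclideanSpace ℝ (Fin d)) 1).tendsto_subseq hu_sphere
  have hul1 : ‖ul‖ = 1 := mem_sphere_zero_iff_norm.1 hul_mem
  -- the norms along the subsequence tend to infinity
  have hatop : Tendsto (fun j => ‖θs (φ j)‖) atTop atTop := by
    apply tendsto_atTop_mono (fun j => ?_) tendsto_natCast_atTop_atTop
    calc (j:ℝ) ≤ (φ j : ℝ) := Nat.cast_le.2 (hφmono.le_apply)
    _ ≤ ‖θs (φ j)‖ := (hθn (φ j)).le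
  -- membership of the limit
  have hul_mem' : ul ∈ V' := by
    have hclosed : IsClosed (V' : Set (EuclideanSpace ℝ (Fin d))) := V'.closed_of_finiteDimensional
    refine hclosed.mem_of_tendsto hconv (Filter.Eventually.of_forall fun j => ?_)
    exact V'.smul_mem _ ((hA _ (hθA (φ j))).1)
  -- p is bounded above on A
  have hpA : ∀ k, p (θs k) ≤ m0 := fun k => by
    have h := (hA _ (hθA k)).2
    have hq := Qb_nonneg hξ' (c + w (θs k))
    nlinarith
  -- Step 1: p (a • ul) ≤ p 0 for all a ≥ 0
  have hstep1 : ∀ a : ℝ, 0 ≤ a → p (a • ul) ≤ p 0 := by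
    intro a ha
    have hineq : ∀ᶠ j in atTop, p (a • u (φ j)) ≤
        (a / ‖θs (φ j)‖) * m0 + (1 - a / ‖θs (φ j)‖) * p 0 := by
      filter_upwards [hatop.eventually_ge_atTop a] with j hj
      set t := a / ‖θs (φ j)‖ with ht_def
      have hapos' := hapos (φ j)
      have ht0 : 0 ≤ t := div_nonneg ha hapos'.le
      have ht1 : t ≤ 1 := (div_le_one hapos').2 hj
      have hcx := hp_conv.2 (Set.mem_univ (θs (φ j))) (Set.mem_univ (0:EuclideanSpace ℝ (Fin d)))
        ht0 (by linarith : (0:ℝ) ≤ 1 - t) (by ring)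
      have hpt : t • θs (φ j) + (1 - t) • (0:EuclideanSpace ℝ (Fin d)) = a • u (φ j) := by
        rw [smul_zero, add_zero, hu_def]
        rw [smul_smul, ht_def, div_eq_mul_inv]
      rw [hpt] at hcx
      have : t * p (θs (φ j)) ≤ t * m0 :=
        mul_le_mul_of_nonneg_left (hpA (φ j)) ht0
      simp only [smul_eq_mul] at hcx
      linarith
    have hlhs : Tendsto (fun j => p (a • u (φ j))) atTop (𝓝 (p (a • ul))) :=
      (hp_cont.tendsto _).comp (hconv.const_smul a)
    have hrhs : Tendsto (fun j => (a / ‖θs (φ j)‖) * m0 +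
        (1 - a / ‖θs (φ j)‖) * p 0) atTop (𝓝 (0 * m0 + (1 - 0) * p 0)) := by
      have hd : Tendsto (fun j => a / ‖θs (φ j)‖) atTop (𝓝 0) :=
        Tendsto.div_atTop tendsto_const_nhds hatop
      exact (hd.mul tendsto_const_nhds).add
        ((tendsto_const_nhds.sub hd).mul tendsto_const_nhds)
    have := le_of_tendsto_of_tendsto hlhs hrhs hineq
    simpa using this
  -- Step 2: pinf ul ≤ 0
  have hstep2 : pinf ul ≤ 0 := by
    have hb : ∀ᶠ a in (atTop : Filter ℝ), p (a • ul) / a ^ 2 ≤ p 0 / a ^ 2 := by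
      filter_upwards [eventually_ge_atTop (1:ℝ)] with a ha
      exact div_le_div_of_nonneg_right (hstep1 a (by linarith)) (by positivity)
    have hz : Tendsto (fun a : ℝ => p 0 / a ^ 2) atTop (𝓝 0) :=
      Tendsto.div_atTop tendsto_const_nhds (tendsto_pow_atTop two_ne_zero)
    exact le_of_tendsto_of_tendsto (hlim ul) hz hb
  -- Step 3: quadratic part at ul is nonpositive
  have hstep3 : Qb ξ (w ul) ≤ 0 := by
    set C1 : ℝ := 4 * (m0 - p 0) + 2 * Qb ξ c with hC1
    set C2 : ℝ := 4 * ‖g0‖ with hC2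
    have hkey : ∀ k, Qb ξ (w (u k)) ≤ C1 / ‖θs k‖ ^ 2 + C2 / ‖θs k‖ := by
      intro k
      have hA2 := (hA _ (hθA k)).2
      -- lower bound on p (θs k)
      have hlow : p 0 - ‖g0‖ * ‖θs k‖ ≤ p (θs k) := by
        have h1 := hg0 (θs k)
        have h2 : -(‖g0‖ * ‖θs k‖) ≤ ⟪g0, θs k⟫ :=
          neg_le_of_abs_le (abs_real_inner_le_norm g0 (θs k))
        linarith
      have hq1 : Qb ξ (c + w (θs k)) ≤ 2 * (m0 - p 0) + 2 * ‖g0‖ * ‖θs k‖ := by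
        nlinarith
      have hq2 : Qb ξ (w (θs k)) ≤ 2 * Qb ξ (c + w (θs k)) + 2 * Qb ξ c := by
        have := Qb_sub_le hξ' (c + w (θs k)) c
        have heq : (c + w (θs k)) - c = w (θs k) := by abel
        rwa [heq] at this
      have hq3 : Qb ξ (w (θs k)) ≤ C1 + C2 * ‖θs k‖ := by
        rw [hC1, hC2]; nlinarith
      have hhom : Qb ξ (w (u k)) = (‖θs k‖⁻¹) ^ 2 * Qb ξ (w (θs k)) := by
        rw [hu_def]
        rw [show w (‖θs k‖⁻¹ • θs k) = ‖θs k‖⁻¹ • w (θs k) from w.map_smul _ _]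
        exact Qb_smul ξ (w (θs k)) (‖θs k‖⁻¹)
      have hnz := (hapos k).ne'
      calc Qb ξ (w (u k)) = (‖θs k‖⁻¹) ^ 2 * Qb ξ (w (θs k)) := hhom
        _ ≤ (‖θs k‖⁻¹) ^ 2 * (C1 + C2 * ‖θs k‖) :=
            mul_le_mul_of_nonneg_left hq3 (by positivity)
        _ = C1 / ‖θs k‖ ^ 2 + C2 / ‖θs k‖ := by
            field_simp
    have hrhs : Tendsto (fun j => C1 / ‖θs (φ j)‖ ^ 2 + C2 / ‖θs (φ j)‖)
        atTop (𝓝 (0 + 0)) := by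
      refine Tendsto.add ?_ ?_
      · exact Tendsto.div_atTop tendsto_const_nhds
          ((tendsto_pow_atTop two_ne_zero).comp hatop)
      · exact Tendsto.div_atTop tendsto_const_nhds hatop
    have hlhs : Tendsto (fun j => Qb ξ (w (u (φ j)))) atTop (𝓝 (Qb ξ (w ul))) :=
      ((Qb_continuous ξ).tendsto _).comp
        ((w.continuous_of_finiteDimensional.tendsto _).comp hconv)
    have := le_of_tendsto_of_tendsto hlhs hrhs
      (Filter.Eventually.of_forall fun j => hkey (φ j))
    simpa using this
  exact huniq ul hul_mem' hul1 (by nlinarith [hstep2, hstep3])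

end Stmt12Aux

open Stmt12Aux in
/-- (i) If the set of minimizers of `J_p` over `ℝ^d` is nonempty and
`θ = 0` is the unique minimizer of `f_∞` over `ℝ^d`, then the set of minimizers of `J_p` is
compact.  (ii) If instead the set of minimizers of `J_p` is nonempty, `∇p` maps
`span{φ(S)}` into itself, and `θ = 0` is the unique minimizer of `f_∞` over `span{φ(S)}`,
then the set of minimizers of `J_p` lying in `span{φ(S)}` is nonempty and compact. -/
theorem stmt_12
    (n d : ℕ) (hn : 0 < n) (hd : 0 < d)
    (Φ : Matrix (Fin n) (Fin d) ℝ) (hΦ : Φ ≠ 0)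
    (ξ : Fin n → ℝ) (hξ : ∀ i, 0 < ξ i)
    (Ξ : Matrix (Fin n) (Fin n) ℝ) (hΞ : Ξ = Matrix.diagonal ξ)
    (proj : (Fin n → ℝ) → (Fin n → ℝ))
    (hproj_mem : ∀ v : Fin n → ℝ, ∃ θ : Fin d → ℝ, proj v = Φ.mulVec θ)
    (hproj_orth : ∀ (v : Fin n → ℝ) (θ : Fin d → ℝ),
      Φ.mulVec θ ⬝ᵥ Ξ.mulVec (v - proj v) = 0)
    (P : Matrix (Fin n) (Fin n) ℝ) (r : Fin n → ℝ)
    (T : (Fin n → ℝ) → (Fin n → ℝ)) (hT : ∀ v, T v = r + P.mulVec v)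
    -- `p` is convex and differentiable with Lipschitz continuous gradient
    (p : EuclideanSpace ℝ (Fin d) → ℝ)
    (gradp : EuclideanSpace ℝ (Fin d) → EuclideanSpace ℝ (Fin d))
    (hp_conv : ConvexOn ℝ Set.univ p)
    (hp_grad : ∀ θ, HasGradientAt p (gradp θ) θ)
    (L : NNReal) (hp_lip : LipschitzWith L gradp)
    -- `p_∞` is convex and differentiable with `p(aθ)/a² → p_∞(θ)`
    (pinf : EuclideanSpace ℝ (Fin d) → ℝ)
    (hpinf_conv : ConvexOn ℝ Set.univ pinf)
    (hpinf_diff : Differentiable ℝ pinf)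
    (hlim : ∀ θ : EuclideanSpace ℝ (Fin d),
      Filter.Tendsto (fun a : ℝ => p (a • θ) / a ^ 2) Filter.atTop (nhds (pinf θ)))
    -- `J_p(θ) = ½‖Π_ξ(T v_θ − v_θ)‖²_ξ + p(θ)`
    (Jp : EuclideanSpace ℝ (Fin d) → ℝ)
    (hJp : ∀ θ : EuclideanSpace ℝ (Fin d),
      Jp θ = (1 / 2) * (proj (T (Φ.mulVec θ) - Φ.mulVec θ) ⬝ᵥ
          Ξ.mulVec (proj (T (Φ.mulVec θ) - Φ.mulVec θ))) + p θ)
    -- `f_∞(θ) = ½‖Π_ξ(P − I)Φθ‖²_ξ + p_∞(θ)`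
    (finf : EuclideanSpace ℝ (Fin d) → ℝ)
    (hfinf : ∀ θ : EuclideanSpace ℝ (Fin d),
      finf θ = (1 / 2) * (proj (((P - 1) * Φ).mulVec θ) ⬝ᵥ
          Ξ.mulVec (proj (((P - 1) * Φ).mulVec θ))) + pinf θ) :
    -- part (i)
    (({θ : EuclideanSpace ℝ (Fin d) | ∀ θ', Jp θ ≤ Jp θ'}.Nonempty) →
      ((∀ θ : EuclideanSpace ℝ (Fin d), finf 0 ≤ finf θ) ∧
        (∀ θ : EuclideanSpace ℝ (Fin d), (∀ θ', finf θ ≤ finf θ') → θ = 0)) →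
      IsCompact {θ : EuclideanSpace ℝ (Fin d) | ∀ θ', Jp θ ≤ Jp θ'}) ∧
    -- part (ii)
    (({θ : EuclideanSpace ℝ (Fin d) | ∀ θ', Jp θ ≤ Jp θ'}.Nonempty) →
      (∀ θ : EuclideanSpace ℝ (Fin d),
        (θ : Fin d → ℝ) ∈ Submodule.span ℝ (Set.range (fun i : Fin n => Φ i)) →
        (gradp θ : Fin d → ℝ) ∈ Submodule.span ℝ (Set.range (fun i : Fin n => Φ i))) →
      ((∀ θ : EuclideanSpace ℝ (Fin d),
          (θ : Fin d → ℝ) ∈ Submodule.span ℝ (Set.range (fun i : Fin n => Φ i)) →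
          finf 0 ≤ finf θ) ∧
        (∀ θ : EuclideanSpace ℝ (Fin d),
          (θ : Fin d → ℝ) ∈ Submodule.span ℝ (Set.range (fun i : Fin n => Φ i)) →
          (∀ θ' : EuclideanSpace ℝ (Fin d),
            (θ' : Fin d → ℝ) ∈ Submodule.span ℝ (Set.range (fun i : Fin n => Φ i)) →
            finf θ ≤ finf θ') → θ = 0)) →
      ({θ : EuclideanSpace ℝ (Fin d) |
          (θ : Fin d → ℝ) ∈ Submodule.span ℝ (Set.range (fun i : Fin n => Φ i)) ∧
          ∀ θ', Jp θ ≤ Jp θ'}.Nonempty ∧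
        IsCompact {θ : EuclideanSpace ℝ (Fin d) |
          (θ : Fin d → ℝ) ∈ Submodule.span ℝ (Set.range (fun i : Fin n => Φ i)) ∧
          ∀ θ', Jp θ ≤ Jp θ'})) := by
  classical
  -- diagonal quadratic form
  have hdot : ∀ x : Fin n → ℝ, x ⬝ᵥ Ξ.mulVec x = Qb ξ x := by
    intro x
    rw [hΞ]
    simp only [dotProduct, Matrix.mulVec_diagonal, Qb]
    exact Finset.sum_congr rfl fun i _ => by ring
  -- `proj` is uniquely characterised, hence linear
  have proj_unique : ∀ v w0 : Fin n → ℝ, (∃ θ0 : Fin d → ℝ, w0 = Φ.mulVec θ0) →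
      (∀ θ0 : Fin d → ℝ, Φ.mulVec θ0 ⬝ᵥ Ξ.mulVec (v - w0) = 0) → proj v = w0 := by
    rintro v w0 ⟨θw, hw⟩ horth
    obtain ⟨θp, hpv⟩ := hproj_mem v
    have hδ : proj v - w0 = Φ.mulVec (θp - θw) := by
      rw [hpv, hw, Matrix.mulVec_sub]
    have hzero : Qb ξ (proj v - w0) = 0 := by
      rw [← hdot]
      have hsub : proj v - w0 = (v - w0) - (v - proj v) := by abel
      calc (proj v - w0) ⬝ᵥ Ξ.mulVec (proj v - w0)
          = Φ.mulVec (θp - θw) ⬝ᵥ Ξ.mulVec ((v - w0) - (v - proj v)) := by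
            rw [← hδ, ← hsub]
        _ = Φ.mulVec (θp - θw) ⬝ᵥ (Ξ.mulVec (v - w0) - Ξ.mulVec (v - proj v)) := by
            rw [Matrix.mulVec_sub Ξ]
        _ = Φ.mulVec (θp - θw) ⬝ᵥ Ξ.mulVec (v - w0)
            - Φ.mulVec (θp - θw) ⬝ᵥ Ξ.mulVec (v - proj v) := by
            rw [dotProduct_sub]
        _ = 0 := by rw [horth (θp - θw), hproj_orth v (θp - θw)]; ring
    exact sub_eq_zero.1 (Qb_eq_zero hξ hzero)
  have proj_add : ∀ x y : Fin n → ℝ, proj (x + y) = proj x + proj y := by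
    intro x y
    obtain ⟨θx, hx⟩ := hproj_mem x
    obtain ⟨θy, hy⟩ := hproj_mem y
    refine proj_unique _ _ ⟨θx + θy, by rw [Matrix.mulVec_add, ← hx, ← hy]⟩ fun θ0 => ?_
    have hsplit : (x + y) - (proj x + proj y) = (x - proj x) + (y - proj y) := by abel
    rw [hsplit, Matrix.mulVec_add, dotProduct_add, hproj_orth x θ0,
      hproj_orth y θ0, add_zero]
  have proj_smul : ∀ (s : ℝ) (x : Fin n → ℝ), proj (s • x) = s • proj x := by
    intro s x
    obtain ⟨θx, hx⟩ := hproj_mem x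
    refine proj_unique _ _ ⟨s • θx, by rw [Matrix.mulVec_smul, ← hx]⟩ fun θ0 => ?_
    have hsplit : s • x - s • proj x = s • (x - proj x) := (smul_sub s x (proj x)).symm
    rw [hsplit, Matrix.mulVec_smul, dotProduct_smul, hproj_orth x θ0, smul_zero]
  have proj_zero : proj 0 = 0 := by
    refine proj_unique 0 0 ⟨0, by rw [Matrix.mulVec_zero]⟩ fun θ0 => by simp
  -- the matrix of the quadratic part
  set B : Matrix (Fin n) (Fin d) ℝ := (P - 1) * Φ with hB
  have hBv : ∀ θ : Fin d → ℝ, B.mulVec θ = P.mulVec (Φ.mulVec θ) - Φ.mulVec θ := by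
    intro θ
    rw [hB, Matrix.sub_mul, Matrix.one_mul, Matrix.sub_mulVec, ← Matrix.mulVec_mulVec]
  have hTB : ∀ θ : Fin d → ℝ, T (Φ.mulVec θ) - Φ.mulVec θ = r + B.mulVec θ := by
    intro θ; rw [hT, hBv]; abel
  -- the linear map θ ↦ Π (B θ)
  set wL : EuclideanSpace ℝ (Fin d) →ₗ[ℝ] (Fin n → ℝ) :=
    { toFun := fun θ => proj (B.mulVec θ)
      map_add' := fun a b => by
        show proj (B.mulVec ((a : Fin d → ℝ) + (b : Fin d → ℝ)))
          = proj (B.mulVec a) + proj (B.mulVec b)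
        rw [Matrix.mulVec_add, proj_add]
      map_smul' := fun s a => by
        show proj (B.mulVec (s • (a : Fin d → ℝ))) = s • proj (B.mulVec a)
        rw [Matrix.mulVec_smul, proj_smul] } with hwL
  set cst : Fin n → ℝ := proj r with hcst
  have hJq : ∀ θ : EuclideanSpace ℝ (Fin d),
      Jp θ = (1/2 : ℝ) * Qb ξ (cst + wL θ) + p θ := by
    intro θ
    rw [hJp θ, hTB θ, proj_add, hdot]
    rfl
  have hfq : ∀ θ : EuclideanSpace ℝ (Fin d),
      finf θ = (1/2 : ℝ) * Qb ξ (wL θ) + pinf θ := by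
    intro θ
    rw [hfinf θ, hdot]
    rfl
  -- analytic facts about p and pinf
  have hp_diff : Differentiable ℝ p := fun x => ((hp_grad x).hasFDerivAt).differentiableAt
  have hp_cont : Continuous p := hp_diff.continuous
  have hpinf0 : pinf 0 = 0 := by
    refine tendsto_nhds_unique (hlim 0) ?_
    simp only [smul_zero]
    exact Filter.Tendsto.div_atTop tendsto_const_nhds (tendsto_pow_atTop two_ne_zero)
  have hQbzero : Qb ξ (0 : Fin n → ℝ) = 0 := by simp [Qb]
  have hfinf0 : finf 0 = 0 := by
    rw [hfq 0, hpinf0, wL.map_zero, hQbzero]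
    ring
  have hJp_cont : Continuous Jp := by
    have hfe : Jp = fun θ => (1/2 : ℝ) * Qb ξ (cst + wL θ) + p θ := funext hJq
    rw [hfe]
    exact (continuous_const.mul ((Qb_continuous ξ).comp
      (continuous_const.add wL.continuous_of_finiteDimensional))).add hp_cont
  have hgrad_ineq : ∀ x y : EuclideanSpace ℝ (Fin d),
      p x + (inner ℝ (gradp x) (y - x) : ℝ) ≤ p y :=
    fun x y => grad_ineq hp_conv (hp_grad x) y
  have hg0' : ∀ θ : EuclideanSpace ℝ (Fin d), p 0 + (inner ℝ (gradp 0) θ : ℝ) ≤ p θ := by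
    intro θ
    simpa using hgrad_ineq 0 θ
  have hM_closed : IsClosed {θ : EuclideanSpace ℝ (Fin d) | ∀ θ', Jp θ ≤ Jp θ'} := by
    have he : {θ : EuclideanSpace ℝ (Fin d) | ∀ θ', Jp θ ≤ Jp θ'}
        = ⋂ θ', {θ | Jp θ ≤ Jp θ'} := by
      ext x; simp [Set.mem_iInter]
    rw [he]
    exact isClosed_iInter fun θ' => isClosed_le hJp_cont continuous_const
  constructor
  · -- part (i)
    rintro ⟨θ₀, hθ₀⟩ ⟨hmin0, huniq0⟩
    refine Metric.isCompact_iff_isClosed_bounded.2 ⟨hM_closed, ?_⟩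
    refine aux_bounded ξ hξ wL cst p pinf hp_conv hp_cont (gradp 0) hg0' hlim
      ⊤ ?_ _ (Jp 0) (fun θ hθ => ⟨Submodule.mem_top, by rw [← hJq θ]; exact hθ 0⟩)
    intro u _ hu1 hle
    have h1 : finf u ≤ finf 0 := by rw [hfq u, hfinf0]; exact hle
    have h3 := huniq0 u fun θ' => h1.trans (hmin0 θ')
    rw [h3, norm_zero] at hu1
    exact one_ne_zero hu1.symm
  · -- part (ii)
    rintro ⟨θ₀, hθ₀⟩ hgradmap ⟨hmin0, huniq0⟩
    set idE : EuclideanSpace ℝ (Fin d) →ₗ[ℝ] (Fin d → ℝ) :=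
      { toFun := fun x => x, map_add' := fun _ _ => rfl, map_smul' := fun _ _ => rfl }
      with hidE
    set V : Submodule ℝ (EuclideanSpace ℝ (Fin d)) :=
      (Submodule.span ℝ (Set.range (fun i : Fin n => Φ i))).comap idE with hV
    have huniqV : ∀ u ∈ V, ‖u‖ = 1 →
        (1/2 : ℝ) * Qb ξ (wL u) + pinf u ≤ 0 → False := by
      intro u hu hu1 hle
      have h1 : finf u ≤ finf 0 := by rw [hfq u, hfinf0]; exact hle
      have h3 := huniq0 u hu fun θ' hθ' => h1.trans (hmin0 θ' hθ')
      rw [h3, norm_zero] at hu1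
      exact one_ne_zero hu1.symm
    have hrow : ∀ i : Fin n, (WithLp.toLp 2 (Φ i) : EuclideanSpace ℝ (Fin d)) ∈ V :=
      fun i => Submodule.subset_span ⟨i, rfl⟩
    have hwperp : ∀ z : EuclideanSpace ℝ (Fin d), z ∈ Vᗮ → wL z = 0 := by
      intro z hz
      have hΦz : Φ.mulVec z = 0 := by
        funext i
        have hinner : (inner ℝ (WithLp.toLp 2 (Φ i) : EuclideanSpace ℝ (Fin d)) z : ℝ) = 0 :=
          (Submodule.mem_orthogonal V z).1 hz _ (hrow i)
        have hsum : (inner ℝ (WithLp.toLp 2 (Φ i) : EuclideanSpace ℝ (Fin d)) z : ℝ)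
            = ∑ j, Φ i j * z j := by
          rw [PiLp.inner_apply]
          exact Finset.sum_congr rfl fun j _ => by
            simp [RCLike.inner_apply, starRingEnd_apply, mul_comm]
        show Φ.mulVec z i = (0 : Fin n → ℝ) i
        rw [Pi.zero_apply]
        calc Φ.mulVec z i = ∑ j, Φ i j * z j := rfl
          _ = 0 := by rw [← hsum, hinner]
      show proj (B.mulVec z) = 0
      rw [show B.mulVec z = (P - 1).mulVec (Φ.mulVec z) from
        (Matrix.mulVec_mulVec (z : Fin d → ℝ) (P - 1) Φ).symm, hΦz,
        Matrix.mulVec_zero, proj_zero]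
    have hgperp : ∀ x z : EuclideanSpace ℝ (Fin d), x ∈ V → z ∈ Vᗮ →
        (inner ℝ x z : ℝ) = 0 :=
      fun x z hx hz => (Submodule.mem_orthogonal V z).1 hz x hx
    -- a minimiser over V exists
    set K : Set (EuclideanSpace ℝ (Fin d)) := (V : Set _) ∩ {θ | Jp θ ≤ Jp 0} with hK
    have hK_closed : IsClosed K :=
      (V.closed_of_finiteDimensional).inter (isClosed_le hJp_cont continuous_const)
    have hK_bounded : Bornology.IsBounded K := by
      refine aux_bounded ξ hξ wL cst p pinf hp_conv hp_cont (gradp 0) hg0' hlim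
        V huniqV K (Jp 0) (fun θ hθ => ⟨hθ.1, by rw [← hJq θ]; exact hθ.2⟩)
    have hK_compact : IsCompact K :=
      Metric.isCompact_iff_isClosed_bounded.2 ⟨hK_closed, hK_bounded⟩
    have hK_ne : K.Nonempty := ⟨0, V.zero_mem, le_refl (Jp 0)⟩
    obtain ⟨θs, hθsK, hθs_min⟩ := hK_compact.exists_isMinOn hK_ne hJp_cont.continuousOn
    have hθsV : θs ∈ V := hθsK.1
    have hminV : ∀ v ∈ V, Jp θs ≤ Jp v := by
      intro v hv
      rcases le_or_gt (Jp v) (Jp 0) with h | h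
      · exact isMinOn_iff.1 hθs_min v ⟨hv, h⟩
      · exact (isMinOn_iff.1 hθs_min 0 ⟨V.zero_mem, le_refl (Jp 0)⟩).trans h.le
    set xstar : Fin n → ℝ := cst + wL θs with hxstar
    have hstat : ∀ v ∈ V, bilQ ξ xstar (wL v) + (inner ℝ (gradp θs) v : ℝ) = 0 := by
      intro v hv
      have hGval : ∀ t : ℝ, Jp (θs + t • v) = ((1/2 : ℝ) * Qb ξ xstar
          + t * bilQ ξ xstar (wL v) + t ^ 2 * ((1/2 : ℝ) * Qb ξ (wL v)))
          + p (θs + t • v) := by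
        intro t
        rw [hJq]
        have harg : cst + wL (θs + t • v) = xstar + t • wL v := by
          rw [wL.map_add, wL.map_smul, hxstar, add_assoc]
        rw [harg, Qb_add_smul]; ring
      have h1 : HasDerivAt (fun t : ℝ => (1/2 : ℝ) * Qb ξ xstar
          + t * bilQ ξ xstar (wL v) + t ^ 2 * ((1/2 : ℝ) * Qb ξ (wL v)))
          (bilQ ξ xstar (wL v)) 0 := by
        have ha : HasDerivAt (fun t : ℝ => (1/2 : ℝ) * Qb ξ xstar
            + t * bilQ ξ xstar (wL v)) (bilQ ξ xstar (wL v)) 0 := by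
          simpa using ((hasDerivAt_id (0:ℝ)).mul_const
            (bilQ ξ xstar (wL v))).const_add ((1/2 : ℝ) * Qb ξ xstar)
        have hb : HasDerivAt (fun t : ℝ => t ^ 2 * ((1/2 : ℝ) * Qb ξ (wL v))) 0 0 := by
          simpa using (hasDerivAt_pow 2 (0:ℝ)).mul_const ((1/2 : ℝ) * Qb ξ (wL v))
        have := ha.add hb; rw [add_zero] at this; exact this
      have hline : HasDerivAt (fun t : ℝ => θs + t • v) v 0 := by
        simpa using ((hasDerivAt_id (0:ℝ)).smul_const v).const_add θs
      have hF : HasFDerivAt p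
          (InnerProductSpace.toDual ℝ (EuclideanSpace ℝ (Fin d)) (gradp θs))
          ((fun t : ℝ => θs + t • v) 0) := by
        simpa using (hp_grad θs).hasFDerivAt
      have h2 : HasDerivAt (fun t : ℝ => p (θs + t • v))
          (inner ℝ (gradp θs) v : ℝ) 0 := by
        have hcomp := hF.comp_hasDerivAt 0 hline
        exact hcomp
      have hderiv : HasDerivAt (fun t : ℝ => Jp (θs + t • v))
          (bilQ ξ xstar (wL v) + (inner ℝ (gradp θs) v : ℝ)) 0 := by
        have hGfun : (fun t : ℝ => Jp (θs + t • v)) = fun t =>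
            ((1/2 : ℝ) * Qb ξ xstar + t * bilQ ξ xstar (wL v)
              + t ^ 2 * ((1/2 : ℝ) * Qb ξ (wL v))) + p (θs + t • v) := funext hGval
        rw [hGfun]
        exact h1.add h2
      have hlocmin : IsLocalMin (fun t : ℝ => Jp (θs + t • v)) 0 := by
        refine Filter.Eventually.of_forall fun t => ?_
        have hmem : θs + t • v ∈ V := V.add_mem hθsV (V.smul_mem _ hv)
        have h0 : θs + (0:ℝ) • v = θs := by rw [zero_smul, add_zero]
        simpa [h0] using hminV _ hmem
      exact hlocmin.hasDerivAt_eq_zero hderiv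
    have hstat_all : ∀ Δ : EuclideanSpace ℝ (Fin d),
        bilQ ξ xstar (wL Δ) + (inner ℝ (gradp θs) Δ : ℝ) = 0 := by
      intro Δ
      have hvmem : ((V.starProjection Δ : EuclideanSpace ℝ (Fin d))) ∈ V :=
        V.starProjection_apply_mem Δ
      have hz : Δ - V.starProjection Δ ∈ Vᗮ :=
        V.sub_starProjection_mem_orthogonal Δ
      have hdecomp : Δ = (V.starProjection Δ : EuclideanSpace ℝ (Fin d))
          + (Δ - V.starProjection Δ) := by abel
      have hgs : gradp θs ∈ V := hgradmap θs hθsV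
      calc bilQ ξ xstar (wL Δ) + (inner ℝ (gradp θs) Δ : ℝ)
          = (bilQ ξ xstar (wL (V.starProjection Δ : EuclideanSpace ℝ (Fin d)))
              + (inner ℝ (gradp θs) ((V.starProjection Δ : EuclideanSpace ℝ (Fin d))) : ℝ))
            + (bilQ ξ xstar (wL (Δ - V.starProjection Δ))
              + (inner ℝ (gradp θs) (Δ - (V.starProjection Δ : EuclideanSpace ℝ (Fin d))) : ℝ)) := by
            conv_lhs => rw [hdecomp]
            rw [wL.map_add, bilQ_add_right, inner_add_right]
            ring
        _ = 0 := by
            rw [hstat _ hvmem, hwperp _ hz, bilQ_zero_right, hgperp _ _ hgs hz]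
            ring
    have hglobal : ∀ h : EuclideanSpace ℝ (Fin d), Jp θs ≤ Jp h := by
      intro h
      have hpgrad := hgrad_ineq θs h
      have hl := hstat_all (h - θs)
      have hq : Jp h = Jp θs - p θs + bilQ ξ xstar (wL (h - θs))
          + (1/2 : ℝ) * Qb ξ (wL (h - θs)) + p h := by
        rw [hJq h, hJq θs]
        have harg : cst + wL h = xstar + (1:ℝ) • wL (h - θs) := by
          rw [one_smul, wL.map_sub, hxstar]; abel
        rw [harg, Qb_add_smul]; ring
      have hqnn := Qb_nonneg (fun i => (hξ i).le) (wL (h - θs))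
      linarith [hpgrad, hl, hq, hqnn]
    refine ⟨⟨θs, hθsV, hglobal⟩, ?_⟩
    have hM2_closed : IsClosed {θ : EuclideanSpace ℝ (Fin d) |
        (θ : Fin d → ℝ) ∈ Submodule.span ℝ (Set.range (fun i : Fin n => Φ i)) ∧
        ∀ θ', Jp θ ≤ Jp θ'} := by
      have he : {θ : EuclideanSpace ℝ (Fin d) |
          (θ : Fin d → ℝ) ∈ Submodule.span ℝ (Set.range (fun i : Fin n => Φ i)) ∧
          ∀ θ', Jp θ ≤ Jp θ'} = (V : Set (EuclideanSpace ℝ (Fin d)))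
            ∩ {θ | ∀ θ', Jp θ ≤ Jp θ'} := rfl
      rw [he]
      exact (V.closed_of_finiteDimensional).inter hM_closed
    refine Metric.isCompact_iff_isClosed_bounded.2 ⟨hM2_closed, ?_⟩
    exact aux_bounded ξ hξ wL cst p pinf hp_conv hp_cont (gradp 0) hg0' hlim
      V huniqV _ (Jp 0) (fun θ hθ => ⟨hθ.1, by rw [← hJq θ]; exact hθ.2 0⟩)
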